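/- Let X, Y, U be Polish spaces (Y, U locally compact), μ₀ a probability measure on X, μ a probability measure on Y, and M : X → P(Y × U) a stochastic kernel such that the Y-marginal of M(x) equals μ for every x. Then there exists a stochastic kernel q : X × Y → P(U) such that M(x)(dy,du) = q(x,y)(du) μ(dy) for all x; i.e., the kernel admits a measurable disintegration over its fixed marginal. -/

import Mathlib

open MeasureTheory ProbabilityTheory

theorem stmt_19 {X : Type*} [TopologicalSpace X] [PolishSpace X]
    [MeasurableSpace X] [BorelSpace X]
    {Y : Type*} [TopologicalSpace Y] [PolishSpace Y] [LocallyCompactSpace Y]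
    [MeasurableSpace Y] [BorelSpace Y]
    {U : Type*} [TopologicalSpace U] [PolishSpace U] [LocallyCompactSpace U]
    [MeasurableSpace U] [BorelSpace U]
    (μ₀ : Measure X) [IsProbabilityMeasure μ₀]
    (μ : Measure Y) [IsProbabilityMeasure μ]
    (M : X → Measure (Y × U))
    (hMmeas : Measurable M)
    (hMprob : ∀ x, IsProbabilityMeasure (M x))
    (hMmarg : ∀ x, (M x).map Prod.fst = μ) :
    ∃ q : X × Y → Measure U,
      Measurable q ∧
      (∀ p, IsProbabilityMeasure (q p)) ∧
      ∀ x, M x = μ.bind fun y => (q (x, y)).map (Prod.mk y) := by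
  have hX : Nonempty X := by
    by_contra h
    have := measure_univ (μ := μ₀)
    rw [Set.univ_eq_empty_iff.mpr (not_nonempty_iff.mp h)] at this
    simp at this
  obtain ⟨x₀⟩ := hX
  have hYU : Nonempty (Y × U) := by
    by_contra h
    have := measure_univ (μ := M x₀)
    rw [Set.univ_eq_empty_iff.mpr (not_nonempty_iff.mp h)] at this
    simp at this
  haveI hU : Nonempty U := ⟨(Classical.choice hYU).2⟩
  let κ : Kernel X (Y × U) := ⟨M, hMmeas⟩
  have hκ : IsMarkovKernel κ := ⟨fun x => hMprob x⟩
  refine ⟨fun p => κ.condKernel p, κ.condKernel.measurable, fun p => ?_, fun x => ?_⟩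
  · exact IsMarkovKernel.isProbabilityMeasure p
  · have hdis : (κ.fst ⊗ₖ κ.condKernel) x = κ x := by
      rw [κ.disintegrate κ.condKernel]
    have hfst : κ.fst x = μ := by
      rw [Kernel.fst_apply]; exact hMmarg x
    ext s hs
    have h1 : M x s = ∫⁻ y, κ.condKernel (x, y) {u | (y, u) ∈ s} ∂μ := by
      rw [show M x = κ x from rfl, ← hdis, Kernel.compProd_apply hs, hfst]; rfl
    rw [h1, Measure.bind_apply hs]
    · refine lintegral_congr fun y => ?_
      rw [Measure.map_apply measurable_prodMk_left hs]
      rfl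
    · have hm : Measurable fun y => (κ.condKernel (x, y)).map (Prod.mk y) := by
        refine Measure.measurable_measure.mpr fun t ht => ?_
        simp_rw [Measure.map_apply measurable_prodMk_left ht]
        exact Kernel.measurable_kernel_prodMk_left' (η := κ.condKernel) ht x
      exact hm.aemeasurable
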